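/- Let q be a power of an odd prime. For any multiplicative characters A, B₁, …, B_n, C of 𝔽_q^× and any λ₁, …, λ_n ∈ 𝔽_q^× (all nonzero), ℙ_D^{(n)}[A; B₁,…,B_n; C; λ₁,…,λ_n] = (A(−1)/(q−1)ⁿ) · Σ_{χ₁,…,χ_n} J(Aχ₁χ₂⋯χ_n, (Cχ₁χ₂⋯χ_n)⁻¹) · ∏_{i=1}^n J(B_iχ_i, χ̄_i)·χ_i(λ_i), where each χ_i ranges over all multiplicative characters of 𝔽_q^×. -/

import Mathlib

open Finset

/-- Jacobi sum `J(A,B) = Σ_x A(x) B(1-x)`. -/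
noncomputable def jacobiSum' {F : Type} [Field F] [Fintype F] (A B : MulChar F ℂ) : ℂ :=
  ∑ x : F, A x * B (1 - x)

/-- One-variable finite-field period function `ℙ_D^{(1)}[A; B; C; λ]`. -/
noncomputable def P1 {F : Type} [Field F] [Fintype F] (A B C : MulChar F ℂ) (l : F) : ℂ :=
  ∑ y : F, A y * (C * A⁻¹) (1 - y) * B⁻¹ (1 - l * y)

/-- Two-variable finite-field Appell–Lauricella period function `ℙ_D^{(2)}`. -/
noncomputable def P2 {F : Type} [Field F] [Fintype F] (A B₁ B₂ C : MulChar F ℂ) (l₁ l₂ : F) : ℂ :=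
  ∑ y : F, A y * (C * A⁻¹) (1 - y) * B₁⁻¹ (1 - l₁ * y) * B₂⁻¹ (1 - l₂ * y)

/-- n-variable finite-field Appell–Lauricella period function `ℙ_D^{(n)}`. -/
noncomputable def PDn {F : Type} [Field F] [Fintype F] (n : ℕ) (A : MulChar F ℂ)
    (B : Fin n → MulChar F ℂ) (C : MulChar F ℂ) (l : Fin n → F) : ℂ :=
  ∑ y : F, A y * (C * A⁻¹) (1 - y) * ∏ i, (B i)⁻¹ (1 - l i * y)

/-- Normalized two-variable Appell–Lauricella function `𝔽_D^{(2)}`. -/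
noncomputable def F2 {F : Type} [Field F] [Fintype F] (A B₁ B₂ C : MulChar F ℂ) (l₁ l₂ : F) : ℂ :=
  P2 A B₁ B₂ C l₁ l₂ / jacobiSum' A (C * A⁻¹)

/-- Normalized n-variable Appell–Lauricella function `𝔽_D^{(n)}`. -/
noncomputable def FDn {F : Type} [Field F] [Fintype F] (n : ℕ) (A : MulChar F ℂ)
    (B : Fin n → MulChar F ℂ) (C : MulChar F ℂ) (l : Fin n → F) : ℂ :=
  PDn n A B C l / jacobiSum' A (C * A⁻¹)

/-- Finite-field Gauss hypergeometric function `₂𝔽₁[A,B;C;λ] = ℙ_D^{(1)}[B;A;C;λ]/J(B,C B̄)`. -/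
noncomputable def twoF1 {F : Type} [Field F] [Fintype F] (A B C : MulChar F ℂ) (l : F) : ℂ :=
  P1 B A C l / jacobiSum' B (C * B⁻¹)

open scoped Classical in
/-- `δ(x) = 1` if `x = 0`, else `0`. -/
noncomputable def deltaC {F : Type} [Field F] [Fintype F] (x : F) : ℂ :=
  if x = 0 then 1 else 0

noncomputable instance {F : Type} [Field F] [Fintype F] : Fintype (MulChar F ℂ) :=
  Fintype.ofFinite _

/-- Character binomial coefficient `(A choose χ) = -χ(-1) J(A, χ̄)`. -/
noncomputable def charBinom {F : Type} [Field F] [Fintype F] (A χ : MulChar F ℂ) : ℂ :=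
  -χ (-1) * jacobiSum' A χ⁻¹

section Aux

open scoped Classical

variable {F : Type} [Field F] [Fintype F]

private lemma neZeroExpAux : NeZero ((Monoid.exponent Fˣ : ℂ)) :=
  ⟨Nat.cast_ne_zero.mpr Monoid.exponent_ne_zero_of_finite⟩

private lemma cardMulCharAux :
    (Fintype.card (MulChar F ℂ) : ℂ) = (Fintype.card F : ℂ) - 1 := by
  have : NeZero ((Monoid.exponent Fˣ : ℂ)) := neZeroExpAux
  have h := MulChar.card_eq_card_units_of_hasEnoughRootsOfUnity F ℂ
  rw [← Nat.card_eq_fintype_card, h, Nat.card_eq_fintype_card, Fintype.card_units,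
    Nat.cast_sub Fintype.card_pos, Nat.cast_one]

private lemma sumCharsAux (a : F) :
    ∑ χ : MulChar F ℂ, χ a = if a = 1 then (Fintype.card F : ℂ) - 1 else 0 := by
  have : NeZero ((Monoid.exponent Fˣ : ℂ)) := neZeroExpAux
  split_ifs with ha
  · subst ha
    simp only [MulChar.map_one, Finset.sum_const, Finset.card_univ, nsmul_eq_mul, mul_one]
    exact cardMulCharAux
  · obtain ⟨χ, hχ⟩ := MulChar.exists_apply_ne_one_of_hasEnoughRootsOfUnity F ℂ ha
    refine eq_zero_of_mul_eq_self_left hχ ?_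
    rw [Finset.mul_sum]
    simp_rw [← MulChar.mul_apply]
    exact Fintype.sum_bijective _ (Group.mulLeft_bijective χ) _ _ fun χ' ↦ rfl

private lemma prodApplyAux {n : ℕ} (χ : Fin n → MulChar F ℂ) {x : F} (hx : x ≠ 0) :
    (∏ i, χ i) x = ∏ i, χ i x := by
  let φ : MulChar F ℂ →* ℂ :=
    { toFun := fun ψ => ψ x
      map_one' := MulChar.one_apply (isUnit_iff_ne_zero.mpr hx)
      map_mul' := fun ψ ψ' => MulChar.mul_apply ψ ψ' x }
  exact map_prod φ χ Finset.univ

private lemma jacobiExpandAux {n : ℕ} (A C : MulChar F ℂ) (χ : Fin n → MulChar F ℂ) :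
    jacobiSum' (A * ∏ i, χ i) (C * ∏ i, χ i)⁻¹
      = ∑ x : F, (A x * C⁻¹ (1 - x)) * ∏ i, (χ i x * (χ i)⁻¹ (1 - x)) := by
  unfold jacobiSum'
  refine Finset.sum_congr rfl fun x _ => ?_
  rw [mul_inv, MulChar.mul_apply, MulChar.mul_apply, ← Finset.prod_inv_distrib]
  rcases eq_or_ne x 0 with rfl | hx0
  · simp [MulChar.map_zero]
  rcases eq_or_ne (1 - x) 0 with h1 | h1
  · simp [h1, MulChar.map_zero]
  rw [prodApplyAux χ hx0, prodApplyAux (fun i => (χ i)⁻¹) h1, Finset.prod_mul_distrib]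
  ring

private lemma innerSumAux (B : MulChar F ℂ) {l x : F}
    (hl : l ≠ 0) (hx0 : x ≠ 0) (hx1 : x ≠ 1) :
    ∑ χ : MulChar F ℂ, (χ x * χ⁻¹ (1 - x)) * (jacobiSum' (B * χ) χ⁻¹ * χ l)
      = ((Fintype.card F : ℂ) - 1) * B ((1 - x) / (1 - (1 - l) * x)) := by
  classical
  have hx1' : (1 : F) - x ≠ 0 := sub_ne_zero.mpr (Ne.symm hx1)
  have key : ∀ χ : MulChar F ℂ, (χ x * χ⁻¹ (1 - x)) * (jacobiSum' (B * χ) χ⁻¹ * χ l)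
      = ∑ t : F, B t * χ (x * l * t / ((1 - x) * (1 - t))) := by
    intro χ
    unfold jacobiSum'
    rw [Finset.sum_mul, Finset.mul_sum]
    refine Finset.sum_congr rfl fun t _ => ?_
    rw [MulChar.mul_apply]
    rcases eq_or_ne t 1 with rfl | ht1
    · simp [MulChar.map_zero]
    rcases eq_or_ne t 0 with rfl | ht0
    · simp [MulChar.map_zero]
    have ht1' : (1 : F) - t ≠ 0 := sub_ne_zero.mpr (Ne.symm ht1)
    have harg : x * l * t / ((1 - x) * (1 - t)) = x * (1 - x)⁻¹ * l * (t * (1 - t)⁻¹) := by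
      field_simp
    rw [harg, map_mul, map_mul, map_mul, map_mul, MulChar.inv_apply', MulChar.inv_apply']
    ring
  simp_rw [key]
  rw [Finset.sum_comm]
  have horth : ∀ t : F, ∑ χ : MulChar F ℂ, B t * χ (x * l * t / ((1 - x) * (1 - t)))
      = B t * (if x * l * t / ((1 - x) * (1 - t)) = 1 then (Fintype.card F : ℂ) - 1 else 0) := by
    intro t
    rw [← Finset.mul_sum, sumCharsAux]
  simp_rw [horth]
  set d : F := 1 - (1 - l) * x with hd
  have fwd : ∀ t : F, x * l * t / ((1 - x) * (1 - t)) = 1 → t * d = 1 - x := by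
    intro t h
    have hden : (1 - x) * (1 - t) ≠ 0 := by
      intro h0
      rw [h0, div_zero] at h
      exact one_ne_zero h.symm
    rw [div_eq_one_iff_eq hden] at h
    rw [hd]
    linear_combination h
  rcases eq_or_ne d 0 with hd0 | hd0
  · rw [hd0, div_zero, MulChar.map_zero, mul_zero]
    refine Finset.sum_eq_zero fun t _ => ?_
    rw [if_neg, mul_zero]
    intro h
    have := fwd t h
    rw [hd0, mul_zero] at this
    exact hx1' this.symm
  · have hiff : ∀ t : F, x * l * t / ((1 - x) * (1 - t)) = 1 ↔ t = (1 - x) / d := by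
      intro t
      constructor
      · intro h
        rw [eq_div_iff hd0]
        exact fwd t h
      · rintro rfl
        have h1t : (1 : F) - (1 - x) / d = l * x / d := by
          field_simp
          rw [hd]
          ring
        have hne : (1 - x) * (l * x / d) ≠ 0 :=
          mul_ne_zero hx1' (div_ne_zero (mul_ne_zero hl hx0) hd0)
        rw [h1t, div_eq_one_iff_eq hne]
        field_simp
    have hsummand : ∀ t : F, B t * (if x * l * t / ((1 - x) * (1 - t)) = 1
          then (Fintype.card F : ℂ) - 1 else 0)
        = if t = (1 - x) / d then ((Fintype.card F : ℂ) - 1) * B ((1 - x) / d) else 0 := by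
      intro t
      rw [if_congr (hiff t) rfl rfl]
      split_ifs with h
      · rw [h]; ring
      · ring
    simp_rw [hsummand]
    rw [Finset.sum_ite_eq' Finset.univ ((1 - x) / d)
      (fun _ => ((Fintype.card F : ℂ) - 1) * B ((1 - x) / d)), if_pos (Finset.mem_univ _)]

private lemma involAux {x : F} (hx : x ≠ 1) : (x / (x - 1)) / (x / (x - 1) - 1) = x := by
  have h : x - 1 ≠ 0 := sub_ne_zero.mpr hx
  rw [show x / (x - 1) - 1 = 1 / (x - 1) by field_simp; ring, div_div_eq_mul_div, div_one,
    div_mul_cancel₀ x h]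

private lemma sigmaNeOneAux {x : F} (hx : x ≠ 1) : x / (x - 1) ≠ 1 := by
  have h : x - 1 ≠ 0 := sub_ne_zero.mpr hx
  intro hcon
  rw [div_eq_one_iff_eq h] at hcon
  exact one_ne_zero (by linear_combination hcon : (1 : F) = 0)

private lemma termEqAux (A C : MulChar F ℂ) {n : ℕ} (B : Fin n → MulChar F ℂ) (l : Fin n → F)
    {y : F} (hy : y ≠ 1) :
    A (y / (y - 1)) * C⁻¹ (1 - y / (y - 1)) *
        ∏ i, B i ((1 - y / (y - 1)) / (1 - (1 - l i) * (y / (y - 1))))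
      = A (-1) * (A y * (C * A⁻¹) (1 - y) * ∏ i, (B i)⁻¹ (1 - l i * y)) := by
  have h1 : y - 1 ≠ 0 := sub_ne_zero.mpr hy
  have h1' : (1 : F) - y ≠ 0 := sub_ne_zero.mpr (Ne.symm hy)
  have ha : (1 : F) - y / (y - 1) = (1 - y)⁻¹ := by
    field_simp
    ring
  have hb : ∀ i : Fin n, (1 - y / (y - 1)) / (1 - (1 - l i) * (y / (y - 1)))
      = (1 - l i * y)⁻¹ := by
    intro i
    have hden : 1 - (1 - l i) * (y / (y - 1)) = (l i * y - 1) / (y - 1) := by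
      field_simp
      ring
    rcases eq_or_ne (1 - l i * y) 0 with h0 | h0
    · have hden0 : 1 - (1 - l i) * (y / (y - 1)) = 0 := by
        rw [hden, div_eq_zero_iff]
        left
        linear_combination -h0
      rw [hden0, div_zero, h0, inv_zero]
    · have h0' : l i * y - 1 ≠ 0 := fun hh => h0 (by linear_combination -hh)
      rw [ha, hden, div_div_eq_mul_div, div_eq_iff h0']
      rw [show l i * y - 1 = -(1 - l i * y) by ring, show y - 1 = -(1 - y) by ring, mul_neg,
        mul_neg, inv_mul_cancel₀ h1', inv_mul_cancel₀ h0]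
  have hBprod : ∀ i : Fin n, B i ((1 - y / (y - 1)) / (1 - (1 - l i) * (y / (y - 1))))
      = (B i)⁻¹ (1 - l i * y) := by
    intro i
    rw [hb i, ← MulChar.inv_apply']
  rw [Finset.prod_congr rfl fun i _ => hBprod i, ha]
  have hc : A (y / (y - 1)) * C⁻¹ ((1 - y)⁻¹) = A (-1) * (A y * (C * A⁻¹) (1 - y)) := by
    rcases eq_or_ne y 0 with rfl | hy0
    · simp [MulChar.map_zero]
    · rw [show y / (y - 1) = -1 * (y * (1 - y)⁻¹) by field_simp; ring]
      rw [map_mul, map_mul, MulChar.inv_apply' C, inv_inv, MulChar.mul_apply,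
        MulChar.inv_apply' A]
      ring
  rw [hc]
  ring

end Aux
theorem statement_3 (F : Type) [Field F] [Fintype F] (hq : Odd (Fintype.card F))
    (n : ℕ) (A C : MulChar F ℂ) (B : Fin n → MulChar F ℂ)
    (l : Fin n → F) (hl : ∀ i, l i ≠ 0) :
    PDn n A B C l =
      A (-1) / ((Fintype.card F : ℂ) - 1) ^ n *
        ∑ χ : Fin n → MulChar F ℂ,
          jacobiSum' (A * ∏ i, χ i) (C * ∏ i, χ i)⁻¹ *
            ∏ i, jacobiSum' (B i * χ i) (χ i)⁻¹ * (χ i) (l i) := by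
  classical
  have hcne : ((Fintype.card F : ℂ) - 1) ≠ 0 :=
    sub_ne_zero.mpr (by exact_mod_cast Fintype.one_lt_card.ne')
  have hT : (∑ χ : Fin n → MulChar F ℂ,
        jacobiSum' (A * ∏ i, χ i) (C * ∏ i, χ i)⁻¹ *
          ∏ i, jacobiSum' (B i * χ i) (χ i)⁻¹ * (χ i) (l i))
      = ((Fintype.card F : ℂ) - 1) ^ n *
          ∑ x : F, A x * C⁻¹ (1 - x) * ∏ i, B i ((1 - x) / (1 - (1 - l i) * x)) := by
    have step1 : ∀ χ : Fin n → MulChar F ℂ,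
        jacobiSum' (A * ∏ i, χ i) (C * ∏ i, χ i)⁻¹ *
            ∏ i, jacobiSum' (B i * χ i) (χ i)⁻¹ * (χ i) (l i)
          = ∑ x : F, (A x * C⁻¹ (1 - x)) *
              ∏ i, (χ i x * (χ i)⁻¹ (1 - x)) *
                (jacobiSum' (B i * χ i) (χ i)⁻¹ * (χ i) (l i)) := by
      intro χ
      rw [jacobiExpandAux, Finset.sum_mul]
      refine Finset.sum_congr rfl fun x _ => ?_
      simp only [Finset.prod_mul_distrib]
      ring
    rw [Finset.sum_congr rfl fun χ _ => step1 χ, Finset.sum_comm, Finset.mul_sum]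
    refine Finset.sum_congr rfl fun x _ => ?_
    rw [← Finset.mul_sum, ← Fintype.prod_sum fun (i : Fin n) (ψ : MulChar F ℂ) =>
      (ψ x * ψ⁻¹ (1 - x)) * (jacobiSum' (B i * ψ) ψ⁻¹ * ψ (l i))]
    rcases eq_or_ne x 0 with rfl | hx0
    · simp [MulChar.map_zero]
    rcases eq_or_ne x 1 with rfl | hx1
    · simp [MulChar.map_zero]
    rw [Finset.prod_congr rfl fun i _ => innerSumAux (B i) (hl i) hx0 hx1,
      Finset.prod_mul_distrib, Finset.prod_const, Finset.card_univ, Fintype.card_fin]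
    ring
  have hS : (∑ x : F, A x * C⁻¹ (1 - x) * ∏ i, B i ((1 - x) / (1 - (1 - l i) * x)))
      = A (-1) * PDn n A B C l := by
    unfold PDn
    rw [Finset.mul_sum]
    have e1 : (∑ x : F, A x * C⁻¹ (1 - x) * ∏ i, B i ((1 - x) / (1 - (1 - l i) * x)))
        = ∑ x ∈ Finset.univ.erase (1 : F),
            A x * C⁻¹ (1 - x) * ∏ i, B i ((1 - x) / (1 - (1 - l i) * x)) := by
      refine (Finset.sum_erase _ ?_).symm
      simp [MulChar.map_zero]
    have e2 : (∑ y : F, A (-1) * (A y * (C * A⁻¹) (1 - y) * ∏ i, (B i)⁻¹ (1 - l i * y)))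
        = ∑ y ∈ Finset.univ.erase (1 : F),
            A (-1) * (A y * (C * A⁻¹) (1 - y) * ∏ i, (B i)⁻¹ (1 - l i * y)) := by
      refine (Finset.sum_erase _ ?_).symm
      simp [MulChar.map_zero]
    rw [e1, e2]
    refine Finset.sum_nbij' (fun x => x / (x - 1)) (fun y => y / (y - 1)) ?_ ?_ ?_ ?_ ?_
    · intro x hx
      exact Finset.mem_erase.mpr ⟨sigmaNeOneAux (Finset.mem_erase.mp hx).1, Finset.mem_univ _⟩
    · intro y hy
      exact Finset.mem_erase.mpr ⟨sigmaNeOneAux (Finset.mem_erase.mp hy).1, Finset.mem_univ _⟩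
    · intro x hx
      exact involAux (Finset.mem_erase.mp hx).1
    · intro y hy
      exact involAux (Finset.mem_erase.mp hy).1
    · intro x hx
      have hx1 : x ≠ 1 := (Finset.mem_erase.mp hx).1
      have h := termEqAux A C B l (sigmaNeOneAux hx1)
      rw [involAux hx1] at h
      exact h
  rw [hT, hS]
  have hA : A (-1) * A (-1) = 1 := by
    rw [← map_mul, show ((-1 : F) * -1) = 1 by ring, MulChar.map_one]
  have hpow : ((Fintype.card F : ℂ) - 1) ^ n ≠ 0 := pow_ne_zero n hcne
  rw [div_mul_eq_mul_div, eq_div_iff hpow]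
  linear_combination (-(((Fintype.card F : ℂ) - 1) ^ n * PDn n A B C l)) * hA
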